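/- Let L be a left Leibniz ring. The anticenter α(L) = {a in L : [x,a] = -[a,x] for all x in L} is an ideal of L. -/

import Mathlib

/-- The anticenter `α(L) = {a : [x,a] = -[a,x] for all x}` of a left Leibniz ring `L`
is an ideal of `L`. -/
theorem anticenter_isIdeal {L : Type*} [AddCommGroup L] (br : L → L → L)
    (hadd_left : ∀ a b c : L, br (a + b) c = br a c + br b c)
    (hadd_right : ∀ a b c : L, br a (b + c) = br a b + br a c)
    (hleib : ∀ a b c : L, br a (br b c) = br (br a b) c + br b (br a c)) :
    let A : Set L := {a | ∀ x : L, br x a = - br a x}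
    (0 : L) ∈ A ∧ (∀ a ∈ A, ∀ b ∈ A, a - b ∈ A) ∧
    (∀ a ∈ A, ∀ y : L, br a y ∈ A ∧ br y a ∈ A) := by
  intro A
  -- bilinearity consequences
  have h0l : ∀ c : L, br 0 c = 0 := by
    intro c
    have h := hadd_left 0 0 c
    rw [add_zero] at h
    exact left_eq_add.mp h
  have h0r : ∀ a : L, br a 0 = 0 := by
    intro a
    have h := hadd_right a 0 0
    rw [add_zero] at h
    exact left_eq_add.mp h
  have hnl : ∀ a c : L, br (-a) c = - br a c := by
    intro a c
    have h := hadd_left a (-a) c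
    rw [add_neg_cancel, h0l] at h
    exact eq_neg_of_add_eq_zero_right h.symm
  have hnr : ∀ a b : L, br a (-b) = - br a b := by
    intro a b
    have h := hadd_right a b (-b)
    rw [add_neg_cancel, h0r] at h
    exact eq_neg_of_add_eq_zero_right h.symm
  -- squares are left annihilators
  have hsq : ∀ u z : L, br (br u u) z = 0 := by
    intro u z
    have h := hleib u u z
    exact (right_eq_add.mp h)
  -- polarized square lemma
  have hpol : ∀ u v z : L, br (br u v) z + br (br v u) z = 0 := by
    intro u v z
    have h := hsq (u + v) z
    rw [hadd_right, hadd_left u v u, hadd_left u v v, hadd_left, hadd_left,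
      hadd_left, hsq, hsq, zero_add, add_zero] at h
    rw [add_comm]
    exact h
  -- key closure lemma
  have hkey : ∀ a : L, (∀ x : L, br x a = - br a x) →
      ∀ y x : L, br x (br a y) = - br (br a y) x := by
    intro a ha y x
    -- C = -D
    have hC : br a (br x y) = - br a (br y x) := by
      have h := hpol x y a
      rw [ha (br x y), ha (br y x)] at h
      have h2 : -(br a (br x y) + br a (br y x)) = 0 := by rw [neg_add]; exact h
      have h3 := neg_eq_zero.mp h2
      exact eq_neg_of_add_eq_zero_left h3
    -- T = -Q + D
    have hT : br y (br a x) = - br (br a y) x + br a (br y x) := by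
      have h := hleib y a x
      rw [ha y, hnl] at h
      exact h
    -- P = C + T
    have hP : br x (br a y) = br a (br x y) + br y (br a x) := by
      have h := hleib x y a
      rw [ha y, ha x, ha (br x y), hnr, hnr] at h
      -- h : -br x (br a y) = -br a (br x y) + -br y (br a x)
      have h2 : -br x (br a y) = -(br a (br x y) + br y (br a x)) := by
        rw [neg_add]; exact h
      exact neg_injective h2
    rw [hP, hT, hC]
    abel
  refine ⟨?_, ?_, ?_⟩
  · intro x
    rw [h0l, h0r, neg_zero]
  · intro a ha b hb x
    have ha' : br x a = - br a x := ha x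
    have hb' : br x b = - br b x := hb x
    rw [sub_eq_add_neg, hadd_right, hadd_left, hnr, hnl, ha', hb']
    abel
  · intro a ha y
    constructor
    · intro x
      exact hkey a ha y x
    · intro x
      have h1 : br y a = - br a y := ha y
      rw [h1, hnr, hnl, hkey a ha y x]
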